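/- Let $K \subset \tilde\Omega_T = [0,T]\times\mathbb{R}^n$ be compact and let $\phi$ be a $C^1$ function such that $F^{-1}(t,x) = (\phi(t,x), x)$ is a $C^1$ diffeomorphism from an open set $\mathcal{O} \supset K$ onto its image, with inverse $F(s,x) = (t(s,x),x)$. If $W(t,x,\theta) \in H^1(\tilde\Omega_T\times\mathbb{R})$ has compact support with $(t,x)$-support contained in $K$, then there exists $C>0$ such that for all $\epsilon\in(0,1]$: $\epsilon^{-1/2}\,\|W(t,x,\phi(t,x)/\epsilon)\|_{L^2(\tilde\Omega_T)} \le C\,\|W\|_{H^1(\tilde\Omega_T\times\mathbb{R})}$. -/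

import Mathlib

open MeasureTheory
open scoped ENNReal

/-- Points of space-time `(t, x) ∈ ℝ × ℝⁿ`. -/
abbrev Pt (n : ℕ) : Type := ℝ × (Fin n → ℝ)

private lemma cov1d {s : Set ℝ} {f f' : ℝ → ℝ} (hs : MeasurableSet s)
    (hf' : ∀ x ∈ s, HasDerivWithinAt f (f' x) s x) (hf : Set.InjOn f s) (g : ℝ → ℝ≥0∞) :
    ∫⁻ x in f '' s, g x = ∫⁻ x in s, ENNReal.ofReal |f' x| * g (f x) := by
  simpa only [ContinuousLinearMap.det_toSpanSingleton] using
    MeasureTheory.lintegral_image_eq_lintegral_abs_det_fderiv_mul volume hs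
      (fun x hx => (hf' x hx).hasFDerivWithinAt) hf g

private lemma traceBound {n : ℕ} (W : Pt n × ℝ → ℂ) (W' : Pt n × ℝ → (Pt n × ℝ) →L[ℝ] ℂ)
    (hW : ∀ q, HasFDerivAt W (W' q) q) (hWsupp : HasCompactSupport W)
    (t₀ : ℝ) (x : Fin n → ℝ) (θ : ℝ) :
    (‖W ((t₀, x), θ)‖₊ : ℝ≥0∞) ^ 2 ≤
      ∫⁻ t, ((‖W ((t, x), θ)‖₊ : ℝ≥0∞) ^ 2 + (‖W' ((t, x), θ)‖₊ : ℝ≥0∞) ^ 2) := by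
  classical
  set ℓ : ℝ → Pt n × ℝ := fun t => ((t, x), θ) with hℓdef
  have contℓ : Continuous ℓ := by fun_prop
  have hW'fd : W' = fderiv ℝ W := funext fun q => ((hW q).fderiv).symm
  have mW' : Measurable W' := by rw [hW'fd]; exact measurable_fderiv ℝ W
  have hcw : Continuous W := continuous_iff_continuousAt.2 fun q => (hW q).continuousAt
  set e : Pt n × ℝ := (((1 : ℝ), (0 : Fin n → ℝ)), (0 : ℝ)) with hedef
  set u : ℝ → ℂ := fun t => W (ℓ t) with hudef
  set u' : ℝ → ℂ := fun t => W' (ℓ t) e with hu'def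
  have hu : ∀ t, HasDerivAt u (u' t) t := by
    intro t
    have hc : HasDerivAt ℓ e t :=
      ((hasDerivAt_id t).prodMk (hasDerivAt_const t x)).prodMk (hasDerivAt_const t θ)
    exact (hW (ℓ t)).comp_hasDerivAt t hc
  have hne : ‖e‖ ≤ 1 := by
    rw [hedef, Prod.norm_def, Prod.norm_def]
    simp
  have hu'le : ∀ t, ‖u' t‖ ≤ ‖W' (ℓ t)‖ := by
    intro t
    calc ‖u' t‖ ≤ ‖W' (ℓ t)‖ * ‖e‖ := (W' (ℓ t)).le_opNorm e
      _ ≤ ‖W' (ℓ t)‖ * 1 := by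
          exact mul_le_mul_of_nonneg_left hne (norm_nonneg _)
      _ = ‖W' (ℓ t)‖ := mul_one _
  set w : ℝ → ℝ := fun t => ‖u t‖ ^ 2 + ‖W' (ℓ t)‖ ^ 2 with hwdef
  have hw0 : ∀ t, 0 ≤ w t := fun t => by positivity
  have hIw : (∫⁻ t, ((‖W ((t, x), θ)‖₊ : ℝ≥0∞) ^ 2 + (‖W' ((t, x), θ)‖₊ : ℝ≥0∞) ^ 2)) =
      ∫⁻ t, ENNReal.ofReal (w t) := by
    refine lintegral_congr fun t => ?_
    rw [hwdef]
    rw [ENNReal.ofReal_add (by positivity) (by positivity),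
      ENNReal.ofReal_pow (norm_nonneg _), ENNReal.ofReal_pow (norm_nonneg _),
      ofReal_norm, ofReal_norm, enorm_eq_nnnorm, enorm_eq_nnnorm]
  by_cases hI : (∫⁻ t, ENNReal.ofReal (w t)) = ⊤
  · rw [hIw, hI]; exact le_top
  -- measurability
  have mu : Measurable u := (hcw.comp contℓ).measurable
  have mWl : Measurable fun t => W' (ℓ t) := mW'.comp contℓ.measurable
  have mu' : Measurable u' := by
    exact ((ContinuousLinearMap.apply ℝ ℂ e).continuous.measurable).comp mWl
  have mw : Measurable w := by
    exact ((mu.norm.pow_const 2).add (mWl.norm.pow_const 2))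
  have intw : Integrable w := by
    refine ⟨mw.aestronglyMeasurable, ?_⟩
    rw [hasFiniteIntegral_iff_norm]
    have : (∫⁻ t, ENNReal.ofReal ‖w t‖) = ∫⁻ t, ENNReal.ofReal (w t) :=
      lintegral_congr fun t => by rw [Real.norm_of_nonneg (hw0 t)]
    rw [this]
    exact lt_top_iff_ne_top.2 hI
  -- derivative of |u|^2
  set v : ℝ → ℝ := fun t => (u t).re * (u t).re + (u t).im * (u t).im with hvdef
  set v' : ℝ → ℝ := fun t =>
    (u' t).re * (u t).re + (u t).re * (u' t).re + ((u' t).im * (u t).im + (u t).im * (u' t).im)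
    with hv'def
  have hre : ∀ t, HasDerivAt (fun s => (u s).re) ((u' t).re) t := fun t =>
    (Complex.reCLM.hasFDerivAt.comp_hasDerivAt t (hu t))
  have him : ∀ t, HasDerivAt (fun s => (u s).im) ((u' t).im) t := fun t =>
    (Complex.imCLM.hasFDerivAt.comp_hasDerivAt t (hu t))
  have hv : ∀ t, HasDerivAt v (v' t) t := fun t =>
    (((hre t).mul (hre t)).add ((him t).mul (him t)))
  have hvnorm : ∀ t, v t = ‖u t‖ ^ 2 := by
    intro t
    rw [hvdef]
    simp only []
    rw [← Complex.normSq_apply, ← Complex.sq_norm]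
  have hv'w : ∀ t, |v' t| ≤ w t := by
    intro t
    have key : |(u t).re * (u' t).re + (u t).im * (u' t).im| ≤ ‖u t‖ * ‖u' t‖ := by
      have h1 : (u t).re * (u' t).re + (u t).im * (u' t).im =
          ((starRingEnd ℂ) (u t) * u' t).re := by
        simp [Complex.mul_re]
      rw [h1]
      calc |((starRingEnd ℂ) (u t) * u' t).re| ≤ ‖(starRingEnd ℂ) (u t) * u' t‖ :=
            Complex.abs_re_le_norm _
        _ = ‖u t‖ * ‖u' t‖ := by
            rw [norm_mul]
            simp
    have h2 : ‖u' t‖ ≤ ‖W' (ℓ t)‖ := hu'le t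
    have h3 : |v' t| ≤ 2 * (‖u t‖ * ‖u' t‖) := by
      have hv't : v' t = 2 * ((u t).re * (u' t).re + (u t).im * (u' t).im) := by
        simp only [hv'def]; ring
      rw [hv't, abs_mul, abs_two]
      exact mul_le_mul_of_nonneg_left key (by norm_num)
    have h4 : 2 * (‖u t‖ * ‖u' t‖) ≤ ‖u t‖ ^ 2 + ‖W' (ℓ t)‖ ^ 2 := by
      nlinarith [norm_nonneg (u t), norm_nonneg (u' t), norm_nonneg (W' (ℓ t)),
        sq_nonneg (‖u t‖ - ‖W' (ℓ t)‖)]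
    exact h3.trans h4
  have mv' : Measurable v' := by
    rw [hv'def]
    fun_prop
  have intv' : Integrable v' := by
    refine intw.mono' mv'.aestronglyMeasurable (Filter.Eventually.of_forall fun t => ?_)
    rw [Real.norm_eq_abs]; exact hv'w t
  -- support
  obtain ⟨R, hRpos, hR⟩ := hWsupp.exists_pos_le_norm
  set a₀ : ℝ := -(|t₀| + R) with ha₀def
  have ha₀t₀ : a₀ ≤ t₀ := by
    have := abs_nonneg t₀
    have := neg_abs_le t₀
    simp only [ha₀def]
    linarith
  have hua₀ : u a₀ = 0 := by
    apply hR
    have h1 : ‖a₀‖ ≤ ‖ℓ a₀‖ := le_trans (norm_fst_le (ℓ a₀).1) (norm_fst_le (ℓ a₀))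
    have h2 : R ≤ ‖a₀‖ := by
      rw [Real.norm_eq_abs, ha₀def, abs_neg, abs_of_nonneg (by positivity)]
      linarith [abs_nonneg t₀]
    linarith
  have hftc : ∫ t in a₀..t₀, v' t = v t₀ - v a₀ :=
    intervalIntegral.integral_eq_sub_of_hasDerivAt (fun t _ => hv t)
      (intv'.intervalIntegrable)
  have hva₀ : v a₀ = 0 := by rw [hvdef]; simp [hua₀]
  have hvt₀ : v t₀ ≤ ∫ t, w t := by
    have h5 : ∫ t in a₀..t₀, v' t ≤ ∫ t in a₀..t₀, w t := by
      apply intervalIntegral.integral_mono_on ha₀t₀ intv'.intervalIntegrable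
        intw.intervalIntegrable
      intro t _
      exact le_trans (le_abs_self _) (hv'w t)
    have h6 : ∫ t in a₀..t₀, w t ≤ ∫ t, w t := by
      rw [intervalIntegral.integral_of_le ha₀t₀]
      exact setIntegral_le_integral intw (Filter.Eventually.of_forall hw0)
    have := hftc
    rw [hva₀, sub_zero] at this
    linarith
  rw [hIw]
  have hofw : (∫⁻ t, ENNReal.ofReal (w t)) = ENNReal.ofReal (∫ t, w t) :=
    (ofReal_integral_eq_lintegral_ofReal intw (Filter.Eventually.of_forall hw0)).symm
  rw [hofw]
  calc (‖W ((t₀, x), θ)‖₊ : ℝ≥0∞) ^ 2 = ENNReal.ofReal (v t₀) := by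
        rw [hvnorm t₀, ENNReal.ofReal_pow (norm_nonneg _), ofReal_norm, enorm_eq_nnnorm]
    _ ≤ ENNReal.ofReal (∫ t, w t) := ENNReal.ofReal_le_ofReal hvt₀


/-- **Refined pulse estimate (Proposition `a11z`(i)).**  Let `Ω̃_T = [0,T] × ℝⁿ`, let `K ⊂ Ω̃_T`
be compact, and let `φ` be `C¹` on an open set `𝒪 ⊇ K` such that
`F⁻¹(t,x) = (φ(t,x), x)` is a `C¹` diffeomorphism of `𝒪` onto its image (with `C¹` inverse
`F(s,x) = (t(s,x), x)`).  If `W(t,x,θ) ∈ H¹(Ω̃_T × ℝ)` (encoded by a pointwise total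
derivative `W'`) has compact support with `(t,x)`-support contained in `K`, then there is a
`C > 0` such that for all `ε ∈ (0,1]`:
`ε^{-1/2} ‖W(t,x,φ(t,x)/ε)‖_{L²(Ω̃_T)} ≤ C ‖W‖_{H¹(Ω̃_T × ℝ)}`. -/
theorem pulse_refined_estimate {n : ℕ} (T : ℝ) (hT : 0 < T)
    (K : Set (Pt n)) (hK : IsCompact K)
    (hKΩ : K ⊆ {p : Pt n | p.1 ∈ Set.Icc 0 T})
    (O : Set (Pt n)) (hO : IsOpen O) (hKO : K ⊆ O)
    (φ : Pt n → ℝ) (hφ : ContDiffOn ℝ 1 φ O)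
    (hΦinj : Set.InjOn (fun p : Pt n => ((φ p, p.2) : Pt n)) O)
    (F : Pt n → Pt n)
    (hFinv : ∀ p ∈ O, F (φ p, p.2) = p)
    (hFC1 : ContDiffOn ℝ 1 F ((fun p : Pt n => ((φ p, p.2) : Pt n)) '' O))
    (W : Pt n × ℝ → ℂ) (W' : Pt n × ℝ → (Pt n × ℝ) →L[ℝ] ℂ)
    (hW : ∀ q, HasFDerivAt W (W' q) q)
    (hWsupp : HasCompactSupport W)
    (hWK : ∀ q : Pt n × ℝ, q.1 ∉ K → W q = 0) :
    ∃ C : ℝ, 0 < C ∧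
      ∀ ε : ℝ, ε ∈ Set.Ioc (0 : ℝ) 1 →
        (∫⁻ p in {p : Pt n | p.1 ∈ Set.Icc 0 T},
            (‖W (p, φ p / ε)‖₊ : ℝ≥0∞) ^ 2) ^ ((1 : ℝ) / 2) ≤
          ENNReal.ofReal (C * Real.sqrt ε) *
            (∫⁻ q in {p : Pt n | p.1 ∈ Set.Icc 0 T} ×ˢ (Set.univ : Set ℝ),
              ((‖W q‖₊ : ℝ≥0∞) ^ 2 + (‖W' q‖₊ : ℝ≥0∞) ^ 2)) ^ ((1 : ℝ) / 2) := by
  classical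
  rcases Set.eq_empty_or_nonempty K with hKe | hKne
  · refine ⟨1, one_pos, fun ε hε => ?_⟩
    have hW0 : ∀ q : Pt n × ℝ, W q = 0 := fun q => hWK q (by simp [hKe])
    have : (∫⁻ p in {p : Pt n | p.1 ∈ Set.Icc 0 T},
        (‖W (p, φ p / ε)‖₊ : ℝ≥0∞) ^ 2) = 0 := by
      simp [hW0]
    rw [this, ENNReal.zero_rpow_of_pos (by norm_num)]
    exact zero_le
  -- notation
  set g : Pt n × ℝ → ℝ≥0∞ := fun q => (‖W q‖₊ : ℝ≥0∞) ^ 2 + (‖W' q‖₊ : ℝ≥0∞) ^ 2 with hgdef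
  set G : (Fin n → ℝ) → ℝ → ℝ≥0∞ := fun x θ => ∫⁻ t, g ((t, x), θ) with hGdef
  have hcw : Continuous W := continuous_iff_continuousAt.2 fun q => (hW q).continuousAt
  have hW'fd : W' = fderiv ℝ W := funext fun q => ((hW q).fderiv).symm
  have mW' : Measurable W' := by rw [hW'fd]; exact measurable_fderiv ℝ W
  have mg : Measurable g := by
    apply Measurable.fun_add
    · exact ((hcw.measurable.nnnorm).coe_nnreal_ennreal).pow_const 2
    · exact ((mW'.nnnorm).coe_nnreal_ennreal).pow_const 2
  have trace : ∀ (t₀ : ℝ) (x : Fin n → ℝ) (θ : ℝ),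
      (‖W ((t₀, x), θ)‖₊ : ℝ≥0∞) ^ 2 ≤ G x θ :=
    fun t₀ x θ => traceBound W W' hW hWsupp t₀ x θ
  -- derivative of φ in the t-direction
  set D : Pt n → ℝ := fun p => fderiv ℝ φ p ((1 : ℝ), (0 : Fin n → ℝ)) with hDdef
  have hφdiff : ∀ p ∈ O, DifferentiableAt ℝ φ p := fun p hp =>
    (hφ.contDiffAt (hO.mem_nhds hp)).differentiableAt one_ne_zero
  have hDcont : ContinuousOn D O := by
    have h1 : ContinuousOn (fderiv ℝ φ) O :=
      hφ.continuousOn_fderiv_of_isOpen hO le_rfl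
    exact (ContinuousLinearMap.apply ℝ ℝ ((1 : ℝ), (0 : Fin n → ℝ))).continuous.comp_continuousOn h1
  have hψ : ∀ (x : Fin n → ℝ) (t : ℝ), (t, x) ∈ O →
      HasDerivAt (fun τ => φ (τ, x)) (D (t, x)) t := by
    intro x t ht
    have hc : HasDerivAt (fun τ : ℝ => ((τ, x) : Pt n)) ((1 : ℝ), (0 : Fin n → ℝ)) t :=
      (hasDerivAt_id t).prodMk (hasDerivAt_const t x)
    exact ((hφdiff _ ht).hasFDerivAt).comp_hasDerivAt t hc
  -- D is nonvanishing on O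
  have hDne : ∀ p ∈ O, D p ≠ 0 := by
    intro p hp hD0
    set Φ : Pt n → Pt n := fun p => ((φ p, p.2) : Pt n) with hΦdef
    have hΦd : HasFDerivAt Φ
        (((fderiv ℝ φ p).prod (ContinuousLinearMap.snd ℝ ℝ (Fin n → ℝ)))) p :=
      ((hφdiff p hp).hasFDerivAt).prodMk hasFDerivAt_snd
    have hFd : DifferentiableWithinAt ℝ F (Φ '' O) (Φ p) :=
      (hFC1.differentiableOn one_ne_zero) _ (Set.mem_image_of_mem _ hp)
    set A := fderivWithin ℝ F (Φ '' O) (Φ p) with hAdef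
    have hA : HasFDerivWithinAt F A (Φ '' O) (Φ p) := hFd.hasFDerivWithinAt
    set B := ((fderiv ℝ φ p).prod (ContinuousLinearMap.snd ℝ ℝ (Fin n → ℝ))) with hBdef
    have hcomp : HasFDerivWithinAt (F ∘ Φ) (A.comp B) O p :=
      hA.comp p hΦd.hasFDerivWithinAt (Set.mapsTo_image Φ O)
    have hid : HasFDerivWithinAt id (A.comp B) O p := by
      apply hcomp.congr
      · intro q hq
        exact (hFinv q hq).symm
      · exact (hFinv p hp).symm
    have hid' : HasFDerivAt id (A.comp B) p := hid.hasFDerivAt (hO.mem_nhds hp)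
    have huniq : A.comp B = ContinuousLinearMap.id ℝ (Pt n) :=
      hid'.unique (hasFDerivAt_id p)
    have happ := congrArg (fun L : Pt n →L[ℝ] Pt n => L ((1 : ℝ), (0 : Fin n → ℝ))) huniq
    have hB : B ((1 : ℝ), (0 : Fin n → ℝ)) = ((0 : ℝ), (0 : Fin n → ℝ)) := by
      rw [hBdef]
      simp only [ContinuousLinearMap.prod_apply, ContinuousLinearMap.coe_snd']
      have : fderiv ℝ φ p ((1 : ℝ), (0 : Fin n → ℝ)) = 0 := hD0
      rw [this]
    simp only [ContinuousLinearMap.comp_apply, hB, ContinuousLinearMap.id_apply] at happ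
    have : A ((0 : ℝ), (0 : Fin n → ℝ)) = 0 := by
      have : ((0 : ℝ), (0 : Fin n → ℝ)) = (0 : Pt n) := rfl
      rw [this, map_zero]
    rw [this] at happ
    have h10 : ((1 : ℝ), (0 : Fin n → ℝ)) ≠ (0 : Pt n) := by
      intro h
      have := congrArg Prod.fst h
      simp at this
    exact h10 happ.symm
  -- minimum of |D| on K
  obtain ⟨p₀, hp₀K, hp₀min⟩ := hK.exists_isMinOn hKne ((hDcont.mono hKO).abs)
  set c : ℝ := |D p₀| with hcdef
  have hc : 0 < c := abs_pos.2 (hDne p₀ (hKO hp₀K))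
  have hcK : ∀ p ∈ K, c ≤ |D p| := fun p hp => hp₀min hp
  refine ⟨Real.sqrt c⁻¹ + 1, by positivity, fun ε hε => ?_⟩
  obtain ⟨hε0, hε1⟩ := hε
  -- the slab and the integrand
  set S : Set (Pt n) := {p : Pt n | p.1 ∈ Set.Icc 0 T} with hSdef
  have hSm : MeasurableSet S := measurableSet_Icc.preimage measurable_fst
  set f : Pt n → ℝ≥0∞ := fun p => (‖W (p, φ p / ε)‖₊ : ℝ≥0∞) ^ 2 with hfdef
  have hfind : ∀ p, f p = K.indicator f p := by
    intro p
    by_cases h : p ∈ K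
    · rw [Set.indicator_of_mem h]
    · rw [Set.indicator_of_notMem h]
      have h0 := hWK (p, φ p / ε) h
      simp [hfdef, h0]
  -- per-slice estimate
  have slice : ∀ x : Fin n → ℝ,
      (∫⁻ t, K.indicator f (t, x)) ≤ ENNReal.ofReal (ε / c) * ∫⁻ θ, G x θ := by
    intro x
    have contx : Continuous fun t : ℝ => ((t, x) : Pt n) :=
      continuous_id.prodMk continuous_const
    set Ox : Set ℝ := {t : ℝ | (t, x) ∈ O} with hOxdef
    have hOx : IsOpen Ox := hO.preimage contx
    set Kx : Set ℝ := {t : ℝ | (t, x) ∈ K} with hKxdef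
    have hKxm : MeasurableSet Kx := (hK.isClosed.preimage contx).measurableSet
    have hKxOx : Kx ⊆ Ox := fun t ht => hKO ht
    set χ : ℝ → ℝ := fun t => φ (t, x) / ε with hχdef
    set χ' : ℝ → ℝ := fun t => D (t, x) / ε with hχ'def
    have hχd : ∀ t ∈ Ox, HasDerivWithinAt χ (χ' t) Ox t := fun t ht =>
      ((hψ x t ht).div_const ε).hasDerivWithinAt
    have hχinj : Set.InjOn χ Ox := by
      intro t₁ h₁ t₂ h₂ he
      have hφeq : φ (t₁, x) = φ (t₂, x) := by
        have h : φ (t₁, x) / ε * ε = φ (t₂, x) / ε * ε :=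
          congrArg (fun y : ℝ => y * ε) he
        rwa [div_mul_cancel₀ _ hε0.ne', div_mul_cancel₀ _ hε0.ne'] at h
      have := hΦinj h₁ h₂ (by simp [hφeq])
      exact (Prod.ext_iff.1 this).1
    have hpt : ∀ t ∈ Ox, f (t, x) ≤
        ENNReal.ofReal (ε / c) * (ENNReal.ofReal |χ' t| * G x (χ t)) := by
      intro t ht
      by_cases hk : (t, x) ∈ K
      · have h2 : f (t, x) ≤ G x (χ t) := trace t x (χ t)
        have h3 : (1 : ℝ≥0∞) ≤ ENNReal.ofReal (ε / c) * ENNReal.ofReal |χ' t| := by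
          rw [← ENNReal.ofReal_mul (by positivity)]
          rw [ENNReal.one_le_ofReal]
          have hχ'v : |χ' t| = |D (t, x)| / ε := by
            rw [hχ'def]
            simp only []
            rw [abs_div, abs_of_pos hε0]
          rw [hχ'v]
          have hcD : c ≤ |D (t, x)| := hcK _ hk
          rw [div_mul_div_comm]
          rw [le_div_iff₀ (by positivity)]
          calc 1 * (c * ε) = ε * c := by ring
            _ ≤ ε * |D (t, x)| := by
                exact mul_le_mul_of_nonneg_left hcD hε0.le
        calc f (t, x) = 1 * f (t, x) := (one_mul _).symm
          _ ≤ (ENNReal.ofReal (ε / c) * ENNReal.ofReal |χ' t|) * f (t, x) :=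
              mul_le_mul_left h3 _
          _ ≤ (ENNReal.ofReal (ε / c) * ENNReal.ofReal |χ' t|) * G x (χ t) :=
              mul_le_mul_right h2 _
          _ = ENNReal.ofReal (ε / c) * (ENNReal.ofReal |χ' t| * G x (χ t)) := mul_assoc _ _ _
      · have h0 := hWK ((t, x), φ (t, x) / ε) hk
        simp [hfdef, h0]
    have hind : (fun t => K.indicator f (t, x)) = Kx.indicator fun t => f (t, x) := by
      funext t
      by_cases h : (t, x) ∈ K
      · rw [Set.indicator_of_mem h, Set.indicator_of_mem (by exact h)]
      · rw [Set.indicator_of_notMem h, Set.indicator_of_notMem (by exact h)]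
    calc (∫⁻ t, K.indicator f (t, x)) = ∫⁻ t in Kx, f (t, x) := by
          rw [hind, lintegral_indicator hKxm]
      _ ≤ ∫⁻ t in Ox, f (t, x) :=
          lintegral_mono' (Measure.restrict_mono hKxOx le_rfl) le_rfl
      _ ≤ ∫⁻ t in Ox, ENNReal.ofReal (ε / c) * (ENNReal.ofReal |χ' t| * G x (χ t)) := by
          apply lintegral_mono_ae
          exact (ae_restrict_iff' hOx.measurableSet).2 (Filter.Eventually.of_forall hpt)
      _ = ENNReal.ofReal (ε / c) * ∫⁻ t in Ox, ENNReal.ofReal |χ' t| * G x (χ t) :=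
          lintegral_const_mul' _ _ ENNReal.ofReal_ne_top
      _ = ENNReal.ofReal (ε / c) * ∫⁻ θ in χ '' Ox, G x θ := by
          rw [cov1d hOx.measurableSet hχd hχinj (G x)]
      _ ≤ ENNReal.ofReal (ε / c) * ∫⁻ θ, G x θ := by
          exact mul_le_mul_right (lintegral_mono' Measure.restrict_le_self le_rfl) _
  -- global assembly
  have hfO : ContinuousOn f O := by
    have h1 : ContinuousOn (fun p : Pt n => W (p, φ p / ε)) O := by
      apply hcw.comp_continuousOn
      exact (continuousOn_id.prodMk (hφ.continuousOn.div_const ε))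
    have h2 : Continuous fun z : ℂ => (‖z‖₊ : ℝ≥0∞) ^ 2 :=
      (ENNReal.continuous_pow 2).comp (ENNReal.continuous_coe.comp continuous_nnnorm)
    exact h2.comp_continuousOn h1
  have aem : AEMeasurable (K.indicator f) (volume : Measure (Pt n)) := by
    rw [aemeasurable_indicator_iff hK.isClosed.measurableSet]
    exact (hfO.aemeasurable hO.measurableSet).mono_measure (Measure.restrict_mono hKO le_rfl)
  have step1 : (∫⁻ p in S, f p) ≤ ∫⁻ p, K.indicator f p := by
    calc (∫⁻ p in S, f p) = ∫⁻ p in S, K.indicator f p := lintegral_congr fun p => hfind p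
      _ ≤ ∫⁻ p, K.indicator f p := lintegral_mono' Measure.restrict_le_self le_rfl
  have step2 : (∫⁻ p, K.indicator f p) = ∫⁻ x, ∫⁻ t, K.indicator f (t, x) := by
    rw [Measure.volume_eq_prod, lintegral_prod _ (by rw [← Measure.volume_eq_prod]; exact aem)]
    exact lintegral_lintegral_swap (by rw [← Measure.volume_eq_prod]; exact aem)
  have step4 : (∫⁻ x, ∫⁻ t, K.indicator f (t, x)) ≤
      ENNReal.ofReal (ε / c) * ∫⁻ x, ∫⁻ θ, G x θ := by
    calc (∫⁻ x, ∫⁻ t, K.indicator f (t, x)) ≤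
        ∫⁻ x, ENNReal.ofReal (ε / c) * ∫⁻ θ, G x θ := lintegral_mono slice
      _ = ENNReal.ofReal (ε / c) * ∫⁻ x, ∫⁻ θ, G x θ :=
          lintegral_const_mul' _ _ ENNReal.ofReal_ne_top
  -- rearranging the triple integral
  have hmeasG1 : Measurable fun p : Pt n => ∫⁻ θ, g (p, θ) :=
    mg.lintegral_prod_right'
  have step5 : (∫⁻ x, ∫⁻ θ, G x θ) = ∫⁻ q : Pt n × ℝ, g q := by
    have e1 : (∫⁻ q : Pt n × ℝ, g q) = ∫⁻ p : Pt n, ∫⁻ θ, g (p, θ) := by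
      rw [Measure.volume_eq_prod, lintegral_prod _ mg.aemeasurable]
    have e2 : (∫⁻ p : Pt n, ∫⁻ θ, g (p, θ)) = ∫⁻ t, ∫⁻ x, ∫⁻ θ, g ((t, x), θ) := by
      rw [Measure.volume_eq_prod, lintegral_prod _ hmeasG1.aemeasurable]
    have e3 : (∫⁻ t, ∫⁻ x, ∫⁻ θ, g ((t, x), θ)) = ∫⁻ x, ∫⁻ t, ∫⁻ θ, g ((t, x), θ) := by
      exact lintegral_lintegral_swap hmeasG1.aemeasurable
    have e4 : ∀ x : Fin n → ℝ, (∫⁻ t, ∫⁻ θ, g ((t, x), θ)) = ∫⁻ θ, ∫⁻ t, g ((t, x), θ) := by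
      intro x
      apply lintegral_lintegral_swap
      apply Measurable.aemeasurable
      apply mg.comp
      exact ((measurable_fst.prodMk measurable_const).prodMk measurable_snd)
    rw [e1, e2, e3]
    exact lintegral_congr fun x => (e4 x).symm
  -- the right-hand side
  have gvanish : ∀ q : Pt n × ℝ, q ∉ S ×ˢ (Set.univ : Set ℝ) → g q = 0 := by
    intro q hq
    have hqS : q.1 ∉ S := by
      intro h
      exact hq (Set.mem_prod.2 ⟨h, Set.mem_univ _⟩)
    have hqK : q.1 ∉ K := fun h => hqS (hKΩ h)
    have hWq : W q = 0 := hWK q hqK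
    have hW'q : W' q = 0 := by
      have hU : IsOpen ({r : Pt n × ℝ | r.1 ∉ K}) := by
        have : ({r : Pt n × ℝ | r.1 ∉ K}) = Prod.fst ⁻¹' Kᶜ := rfl
        rw [this]
        exact hK.isClosed.isOpen_compl.preimage continuous_fst
      have hWev : W =ᶠ[nhds q] fun _ => (0 : ℂ) := by
        filter_upwards [hU.mem_nhds hqK] with r hr
        exact hWK r hr
      have h0 : HasFDerivAt (fun _ : Pt n × ℝ => (0 : ℂ)) (W' q) q :=
        (hW q).congr_of_eventuallyEq hWev.symm
      exact (h0.unique (hasFDerivAt_const 0 q))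
    rw [hgdef]
    simp [hWq, hW'q]
  have hgind : g = (S ×ˢ (Set.univ : Set ℝ)).indicator g := by
    funext q
    by_cases h : q ∈ S ×ˢ (Set.univ : Set ℝ)
    · rw [Set.indicator_of_mem h]
    · rw [Set.indicator_of_notMem h, gvanish q h]
  have step6 : (∫⁻ q : Pt n × ℝ, g q) = ∫⁻ q in S ×ˢ (Set.univ : Set ℝ), g q := by
    rw [← lintegral_indicator (hSm.prod MeasurableSet.univ), ← hgind]
  have main : (∫⁻ p in S, f p) ≤
      ENNReal.ofReal (ε / c) * ∫⁻ q in S ×ˢ (Set.univ : Set ℝ), g q := by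
    calc (∫⁻ p in S, f p) ≤ ∫⁻ p, K.indicator f p := step1
      _ = ∫⁻ x, ∫⁻ t, K.indicator f (t, x) := step2
      _ ≤ ENNReal.ofReal (ε / c) * ∫⁻ x, ∫⁻ θ, G x θ := step4
      _ = ENNReal.ofReal (ε / c) * ∫⁻ q : Pt n × ℝ, g q := by rw [step5]
      _ = ENNReal.ofReal (ε / c) * ∫⁻ q in S ×ˢ (Set.univ : Set ℝ), g q := by rw [step6]
  -- final rpow manipulation
  have hsqrt : (ENNReal.ofReal (ε / c)) ^ ((1 : ℝ) / 2) ≤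
      ENNReal.ofReal ((Real.sqrt c⁻¹ + 1) * Real.sqrt ε) := by
    rw [ENNReal.ofReal_rpow_of_nonneg (by positivity : (0:ℝ) ≤ ε / c) (by norm_num : (0:ℝ) ≤ (1:ℝ)/2)]
    apply ENNReal.ofReal_le_ofReal
    rw [← Real.sqrt_eq_rpow, div_eq_mul_inv, Real.sqrt_mul hε0.le]
    nlinarith [Real.sqrt_nonneg ε, Real.sqrt_nonneg c⁻¹]
  calc (∫⁻ p in S, f p) ^ ((1 : ℝ) / 2) ≤
      (ENNReal.ofReal (ε / c) * ∫⁻ q in S ×ˢ (Set.univ : Set ℝ), g q) ^ ((1 : ℝ) / 2) :=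
        ENNReal.rpow_le_rpow main (by norm_num)
    _ = (ENNReal.ofReal (ε / c)) ^ ((1 : ℝ) / 2) *
        (∫⁻ q in S ×ˢ (Set.univ : Set ℝ), g q) ^ ((1 : ℝ) / 2) :=
        ENNReal.mul_rpow_of_nonneg _ _ (by norm_num)
    _ ≤ ENNReal.ofReal ((Real.sqrt c⁻¹ + 1) * Real.sqrt ε) *
        (∫⁻ q in S ×ˢ (Set.univ : Set ℝ), g q) ^ ((1 : ℝ) / 2) :=
        mul_le_mul_left hsqrt _
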